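/- If the positive kernels a^{(n)}_j are monotonically decreasing in the subscript index j (a^{(n)}_{j-1} > a^{(n)}_j > 0 for 1 ≤ j ≤ n-1), then the associated DCC kernels satisfy p^{(n)}_{n-k} ≥ 0 for all 1 ≤ k ≤ n. -/

import Mathlib

/-- DOC orthogonality: `∑_{j=k}^{i} θ^{(i)}_{i-j} a^{(j)}_{j-k} = δ_{ik}`. -/
lemma DOC_orth (a θ : ℕ → ℕ → ℝ)
    (hapos : ∀ n j : ℕ, 1 ≤ n → j ≤ n - 1 → 0 < a n j)
    (hθ0 : ∀ n : ℕ, 1 ≤ n → θ n 0 = 1 / a n 0)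
    (hθ : ∀ n k : ℕ, 1 ≤ k → k ≤ n - 1 →
      θ n (n - k) = -(1 / a k 0) * ∑ j ∈ Finset.Icc (k + 1) n, θ n (n - j) * a j (j - k))
    (i k : ℕ) (hk : 1 ≤ k) (hki : k ≤ i) :
    (∑ j ∈ Finset.Icc k i, θ i (i - j) * a j (j - k)) = if i = k then 1 else 0 := by
  rcases eq_or_lt_of_le hki with h | h
  · subst h
    have ha : a k 0 ≠ 0 := ne_of_gt (hapos k 0 hk (Nat.zero_le _))
    simp [Finset.Icc_self, hθ0 k hk, ha]
  · have hik : ¬ (i = k) := by omega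
    have ha : a k 0 ≠ 0 := ne_of_gt (hapos k 0 hk (Nat.zero_le _))
    rw [if_neg hik]
    have hsplit : Finset.Icc k i = insert k (Finset.Icc (k + 1) i) := by
      ext x; simp only [Finset.mem_Icc, Finset.mem_insert]; omega
    rw [hsplit, Finset.sum_insert (by simp [Finset.mem_Icc])]
    rw [hθ i k hk (by omega)]
    field_simp
    simp

/-- Complementary identity: `∑_{j=k}^{n} p^{(n)}_{n-j} a^{(j)}_{j-k} = 1`. -/
lemma DCC_comp (a θ p : ℕ → ℕ → ℝ)
    (hapos : ∀ n j : ℕ, 1 ≤ n → j ≤ n - 1 → 0 < a n j)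
    (hθ0 : ∀ n : ℕ, 1 ≤ n → θ n 0 = 1 / a n 0)
    (hθ : ∀ n k : ℕ, 1 ≤ k → k ≤ n - 1 →
      θ n (n - k) = -(1 / a k 0) * ∑ j ∈ Finset.Icc (k + 1) n, θ n (n - j) * a j (j - k))
    (hp : ∀ n k : ℕ, 1 ≤ k → k ≤ n →
      p n (n - k) = ∑ j ∈ Finset.Icc k n, θ j (j - k))
    (n k : ℕ) (hk : 1 ≤ k) (hkn : k ≤ n) :
    (∑ j ∈ Finset.Icc k n, p n (n - j) * a j (j - k)) = 1 := by
  have h1 : (∑ j ∈ Finset.Icc k n, p n (n - j) * a j (j - k)) =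
      ∑ j ∈ Finset.Icc k n, ∑ i ∈ Finset.Icc j n, θ i (i - j) * a j (j - k) := by
    refine Finset.sum_congr rfl fun j hj => ?_
    rw [Finset.mem_Icc] at hj
    rw [hp n j (le_trans hk hj.1) hj.2, Finset.sum_mul]
  rw [h1]
  have h2 : (∑ j ∈ Finset.Icc k n, ∑ i ∈ Finset.Icc j n, θ i (i - j) * a j (j - k)) =
      ∑ i ∈ Finset.Icc k n, ∑ j ∈ Finset.Icc k i, θ i (i - j) * a j (j - k) := by
    refine Finset.sum_comm' ?_
    intro x y
    simp only [Finset.mem_Icc]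
    omega
  rw [h2]
  have h3 : ∀ i ∈ Finset.Icc k n,
      (∑ j ∈ Finset.Icc k i, θ i (i - j) * a j (j - k)) = if i = k then 1 else 0 := by
    intro i hi
    rw [Finset.mem_Icc] at hi
    exact DOC_orth a θ hapos hθ0 hθ i k hk hi.1
  rw [Finset.sum_congr rfl h3, Finset.sum_ite_eq' (Finset.Icc k n) k (fun _ => (1:ℝ))]
  simp [Finset.mem_Icc, hkn]

/-- If the positive kernels `a^{(n)}_j` are monotonically decreasing in the subscript
index `j`, then the associated DCC kernels satisfy `p^{(n)}_{n-k} ≥ 0`. -/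
theorem DCC_nonneg (a θ p : ℕ → ℕ → ℝ)
    (hapos : ∀ n j : ℕ, 1 ≤ n → j ≤ n - 1 → 0 < a n j)
    (hadec : ∀ n j : ℕ, 1 ≤ j → j ≤ n - 1 → a n j < a n (j - 1))
    (hθ0 : ∀ n : ℕ, 1 ≤ n → θ n 0 = 1 / a n 0)
    (hθ : ∀ n k : ℕ, 1 ≤ k → k ≤ n - 1 →
      θ n (n - k) = -(1 / a k 0) * ∑ j ∈ Finset.Icc (k + 1) n, θ n (n - j) * a j (j - k))
    (hp : ∀ n k : ℕ, 1 ≤ k → k ≤ n →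
      p n (n - k) = ∑ j ∈ Finset.Icc k n, θ j (j - k))
    (n k : ℕ) (hk : 1 ≤ k) (hkn : k ≤ n) :
    0 ≤ p n (n - k) := by
  -- downward induction on k via the fuel m ≥ n - k
  suffices H : ∀ m k, n - k ≤ m → 1 ≤ k → k ≤ n → 0 ≤ p n (n - k) by
    exact H (n - k) k le_rfl hk hkn
  intro m
  induction m with
  | zero =>
    intro k hm hk hkn
    have hkn' : k = n := by omega
    have h0 : p n (n - k) = θ n 0 := by
      rw [hp n k hk hkn, hkn', Finset.Icc_self, Finset.sum_singleton, Nat.sub_self]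
    rw [h0, hθ0 n (by omega)]
    exact le_of_lt (div_pos one_pos (hapos n 0 (by omega) (Nat.zero_le _)))
  | succ m ih =>
    intro k hm hk hkn
    rcases eq_or_lt_of_le hkn with h | h
    · have h0 : p n (n - k) = θ n 0 := by
        rw [hp n k hk hkn, ← h, Finset.Icc_self, Finset.sum_singleton, Nat.sub_self]
      rw [h0, hθ0 n (by omega)]
      exact le_of_lt (div_pos one_pos (hapos n 0 (by omega) (Nat.zero_le _)))
    · -- k < n
      have hak : (0:ℝ) < a k 0 := hapos k 0 hk (Nat.zero_le _)
      have hcomp := DCC_comp a θ p hapos hθ0 hθ hp n k hk hkn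
      have hcomp' := DCC_comp a θ p hapos hθ0 hθ hp n (k + 1) (by omega) (by omega)
      have hsplit : Finset.Icc k n = insert k (Finset.Icc (k + 1) n) := by
        ext x; simp only [Finset.mem_Icc, Finset.mem_insert]; omega
      rw [hsplit, Finset.sum_insert (by simp [Finset.mem_Icc])] at hcomp
      -- nonnegativity of the later p's
      have hpj : ∀ j ∈ Finset.Icc (k + 1) n, 0 ≤ p n (n - j) := by
        intro j hj
        rw [Finset.mem_Icc] at hj
        exact ih j (by omega) (by omega) hj.2
      -- compare the two sums
      have hle : (∑ j ∈ Finset.Icc (k + 1) n, p n (n - j) * a j (j - k)) ≤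
          ∑ j ∈ Finset.Icc (k + 1) n, p n (n - j) * a j (j - (k + 1)) := by
        refine Finset.sum_le_sum fun j hj => ?_
        rw [Finset.mem_Icc] at hj
        have hdec := hadec j (j - k) (by omega) (by omega)
        have : j - k - 1 = j - (k + 1) := by omega
        rw [this] at hdec
        exact mul_le_mul_of_nonneg_left (le_of_lt hdec) (hpj j (Finset.mem_Icc.mpr hj))
      have hsum1 : (∑ j ∈ Finset.Icc (k + 1) n, p n (n - j) * a j (j - k)) ≤ 1 := by
        calc (∑ j ∈ Finset.Icc (k + 1) n, p n (n - j) * a j (j - k))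
            ≤ ∑ j ∈ Finset.Icc (k + 1) n, p n (n - j) * a j (j - (k + 1)) := hle
          _ = 1 := hcomp'
      -- conclude
      have hkk : p n (n - k) * a k 0 =
          1 - ∑ j ∈ Finset.Icc (k + 1) n, p n (n - j) * a j (j - k) := by
        rw [Nat.sub_self] at hcomp; linarith
      have hnn : 0 ≤ p n (n - k) * a k 0 := by rw [hkk]; linarith
      by_contra hneg
      push_neg at hneg
      nlinarith [mul_pos hak (neg_pos.mpr hneg)]
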